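/- arXiv:math/9810202 — 4 statements merged into one kernel-verified Lean document; each statement's English description precedes it below -/
import Mathlib

section
/- The Lie algebra 𝔢(2) of the group of orientation-preserving Euclidean motions of the plane (spanned by t, e₁, e₂ with [t, e₁] = e₂, [t, e₂] = −e₁, [e₁, e₂] = 0) admits no ad-invariant symmetric bilinear form of Lorentzian signature. -/
/-- The Lie algebra `𝔢(2)` of orientation-preserving Euclidean
motions of the plane — spanned by `t, e₁, e₂` with `[t,e₁] = e₂`, `[t,e₂] = −e₁`,
`[e₁,e₂] = 0` — admits no ad-invariant symmetric bilinear form of Lorentzian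
signature `(1,2)`, i.e. no such form with an orthogonal spanning triple on which it
takes one negative and two positive values. -/
theorem euclidean_motions_algebra_has_no_invariant_lorentz_form
    {𝔤 : Type*} [LieRing 𝔤] [LieAlgebra ℝ 𝔤]
    (t e₁ e₂ : 𝔤)
    (hspan : Submodule.span ℝ {t, e₁, e₂} = ⊤)
    (hind : LinearIndependent ℝ ![t, e₁, e₂])
    (h1 : ⁅t, e₁⁆ = e₂) (h2 : ⁅t, e₂⁆ = -e₁) (h3 : ⁅e₁, e₂⁆ = 0) :
    ¬ ∃ κ : 𝔤 →ₗ[ℝ] 𝔤 →ₗ[ℝ] ℝ,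
        (∀ X Y : 𝔤, κ X Y = κ Y X) ∧
        (∀ X Y Z : 𝔤, κ ⁅Z, X⁆ Y + κ X ⁅Z, Y⁆ = 0) ∧
        (∃ u v w : 𝔤, Submodule.span ℝ {u, v, w} = ⊤ ∧
          κ u v = 0 ∧ κ u w = 0 ∧ κ v w = 0 ∧
          κ u u < 0 ∧ 0 < κ v v ∧ 0 < κ w w) := by
  rintro ⟨κ, hsym, hinv, u, v, w, huvw, _, _, _, huu, hvv, hww⟩
  have hb1 : ⁅e₂, t⁆ = e₁ := by rw [← lie_skew, h2]; simp
  have hb2 : ⁅e₁, t⁆ = -e₂ := by rw [← lie_skew, h1]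
  have hb3 : ⁅e₂, e₁⁆ = 0 := by rw [← lie_skew, h3]; simp
  have k1 : κ t e₁ = 0 := by
    have h := hinv t t e₂
    rw [hb1] at h
    have hs := hsym e₁ t
    linarith
  have k2 : κ t e₂ = 0 := by
    have h := hinv t t e₁
    rw [hb2] at h
    have hs := hsym e₂ t
    simp only [map_neg, LinearMap.neg_apply] at h
    linarith
  have k3 : κ e₁ e₁ = 0 := by
    have h := hinv t e₁ e₂
    rw [hb1, hb3] at h
    simpa using h
  have k4 : κ e₂ e₂ = 0 := by
    have h := hinv t e₂ e₁
    rw [hb2, h3] at h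
    simp only [map_neg, LinearMap.neg_apply, map_zero] at h
    linarith
  have k5 : κ e₁ e₂ = 0 := by
    have h := hinv e₁ e₁ t
    rw [h1] at h
    have hs := hsym e₂ e₁
    linarith
  have key : ∀ X : 𝔤, ∃ a : ℝ, κ X X = a ^ 2 * κ t t := by
    intro X
    have hX : X ∈ Submodule.span ℝ ({t, e₁, e₂} : Set 𝔤) := hspan ▸ Submodule.mem_top
    rw [Submodule.mem_span_insert] at hX
    obtain ⟨a, z, hz, rfl⟩ := hX
    rw [Submodule.mem_span_pair] at hz
    obtain ⟨b, c, rfl⟩ := hz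
    refine ⟨a, ?_⟩
    simp only [map_add, map_smul, LinearMap.add_apply, LinearMap.smul_apply, smul_eq_mul,
      k1, k2, k3, k4, k5, hsym e₁ t, hsym e₂ t, hsym e₂ e₁]
    ring
  obtain ⟨a, ha⟩ := key u
  obtain ⟨b, hb⟩ := key v
  rw [ha] at huu
  rw [hb] at hvv
  nlinarith [mul_pos hvv (neg_pos.mpr huu), sq_nonneg (a * b * κ t t)]
end

section
/- Let 𝔤 be a Lie algebra with nilradical 𝔫 (the maximal nilpotent ideal), and let A be a semisimple automorphism of 𝔤 that restricts to the identity on 𝔫. Then A is the identity. -/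
/-- Let `𝔤` be a (finite-dimensional real solvable) Lie algebra
with nilradical `𝔫` (the maximal nilpotent ideal), and let `A` be a semisimple
(diagonalizable) Lie algebra automorphism of `𝔤` restricting to the identity on
`𝔫`. Then `A` is the identity. -/
theorem semisimple_automorphism_fixing_nilradical_is_identity
    {𝔤 : Type*} [LieRing 𝔤] [LieAlgebra ℝ 𝔤] [Module.Finite ℝ 𝔤]
    [LieAlgebra.IsSolvable 𝔤]
    (𝔫 : LieIdeal ℝ 𝔤)
    (hnil : LieRing.IsNilpotent 𝔫)
    (hmax : ∀ I : LieIdeal ℝ 𝔤, LieRing.IsNilpotent I → I ≤ 𝔫)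
    (A : 𝔤 ≃ₗ⁅ℝ⁆ 𝔤)
    (hss : Module.End.IsSemisimple (A.toLinearEquiv.toLinearMap : Module.End ℝ 𝔤))
    (hfix : ∀ X ∈ 𝔫, A X = X) :
    ∀ X : 𝔤, A X = X := by
  classical
  -- The centralizer of `𝔫` as an ideal of `𝔤`.
  let Csub : Submodule ℝ 𝔤 :=
    { carrier := {x : 𝔤 | ∀ n ∈ 𝔫, ⁅x, n⁆ = 0}
      add_mem' := fun {a b} ha hb => by
        intro n hn; rw [add_lie, ha n hn, hb n hn, add_zero]
      zero_mem' := by intro n hn; simp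
      smul_mem' := fun c x hx => by
        intro n hn; rw [smul_lie, hx n hn, smul_zero] }
  let C : LieIdeal ℝ 𝔤 :=
    { Csub with
      lie_mem := by
        intro y x hx
        intro n hn
        rw [lie_lie, hx n hn, lie_zero, zero_sub, hx _ (𝔫.lie_mem hn), neg_zero] }
  have hCmem : ∀ x : 𝔤, x ∈ C ↔ ∀ n ∈ 𝔫, ⁅x, n⁆ = 0 := fun x => Iff.rfl
  -- Key claim: the centralizer of the nilradical is contained in the nilradical.
  have hCn : C ≤ 𝔫 := by
    by_contra hC
    set s : Set (LieIdeal ℝ 𝔤) := {J | J ≤ C ∧ ¬ J ≤ 𝔫} with hs_def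
    have hs : s.Nonempty := ⟨C, le_refl C, hC⟩
    have hne : ((fun J : LieIdeal ℝ 𝔤 => Module.finrank ℝ J) '' s).Nonempty := hs.image _
    obtain ⟨J, hJs, hJn⟩ := Nat.sInf_mem hne
    have hmin : ∀ J' ∈ s, Module.finrank ℝ J ≤ Module.finrank ℝ J' := by
      intro J' h'
      exact le_trans (le_of_eq hJn) (Nat.sInf_le ⟨J', h', rfl⟩)
    set D : LieIdeal ℝ 𝔤 := ⁅J, J⁆ with hD_def
    have hDJ : D ≤ J := LieSubmodule.lie_le_right J J
    have hDC : D ≤ C := hDJ.trans hJs.1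
    by_cases hD : D ≤ 𝔫
    · -- then `J` is a nilpotent ideal not contained in `𝔫`: contradiction.
      have h2 : LieModule.lowerCentralSeries ℝ J J 2 = ⊥ := by
        rw [eq_bot_iff, LieModule.lowerCentralSeries_succ]
        rw [LieSubmodule.lie_le_iff]
        intro x _ m hm
        -- first: the coercion of `m` lies in `𝔫`
        have hmn : (m : 𝔤) ∈ 𝔫 := by
          have hle : (LieSubmodule.toSubmodule (LieModule.lowerCentralSeries ℝ J J 1)) ≤
              (LieSubmodule.toSubmodule 𝔫).comap (J : Submodule ℝ 𝔤).subtype := by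
            rw [LieModule.lowerCentralSeries_succ, LieModule.lowerCentralSeries_zero,
              LieSubmodule.lieIdeal_oper_eq_linear_span']
            apply Submodule.span_le.mpr
            rintro _ ⟨y, -, z, -, rfl⟩
            exact hD (LieSubmodule.lie_mem_lie y.2 z.2)
          exact hle hm
        have hx0 : (⁅x, m⁆ : 𝔤) = 0 := hJs.1 x.2 (m : 𝔤) hmn
        have : (⁅x, m⁆ : J) = 0 := Subtype.ext hx0
        simp [this]
      have hJnil : LieRing.IsNilpotent J := (LieModule.isNilpotent_iff ℝ J J).mpr ⟨2, h2⟩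
      exact hJs.2 (hmax J hJnil)
    · -- then `D ∈ s`, so by minimality `D = J`, contradicting solvability.
      have hDs : D ∈ s := ⟨hDC, hD⟩
      have hle := hmin D hDs
      have hDJ' : (D : Submodule ℝ 𝔤) = (J : Submodule ℝ 𝔤) :=
        Submodule.eq_of_le_of_finrank_le hDJ hle
      have hDJeq : D = J := (LieSubmodule.toSubmodule_inj _ _).mp hDJ'
      have hiter : ∀ k, LieAlgebra.derivedSeriesOfIdeal ℝ 𝔤 k J = J := by
        intro k
        induction k with
        | zero => simp [LieAlgebra.derivedSeriesOfIdeal_zero]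
        | succ k ih =>
          rw [LieAlgebra.derivedSeriesOfIdeal_succ, ih, ← hD_def, hDJeq]
      obtain ⟨k, hk⟩ := LieAlgebra.IsSolvable.solvable ℝ 𝔤
      have : J ≤ ⊥ := by
        calc J = LieAlgebra.derivedSeriesOfIdeal ℝ 𝔤 k J := (hiter k).symm
        _ ≤ LieAlgebra.derivedSeriesOfIdeal ℝ 𝔤 k ⊤ := LieAlgebra.derivedSeriesOfIdeal_mono le_top k
        _ = ⊥ := by rw [← LieAlgebra.derivedSeries_def]; exact hk
      exact hJs.2 (this.trans bot_le)
  -- `A X - X` centralizes `𝔫` for every `X`.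
  have hU : ∀ X : 𝔤, A X - X ∈ C := by
    intro X n hn
    have h1 : ⁅X, n⁆ ∈ 𝔫 := 𝔫.lie_mem hn
    have : ⁅A X, n⁆ = ⁅X, n⁆ := by
      conv_lhs => rw [← hfix n hn]
      rw [← LieEquiv.map_lie A X n]
      exact hfix _ h1
    rw [sub_lie, this, sub_self]
  -- hence `(A - 1)² = 0`.
  set f : Module.End ℝ 𝔤 := (A.toLinearEquiv.toLinearMap : Module.End ℝ 𝔤) with hf
  set B : Module.End ℝ 𝔤 := f - algebraMap ℝ (Module.End ℝ 𝔤) 1 with hB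
  have hBapply : ∀ x : 𝔤, B x = A x - x := by
    intro x
    simp [hB, hf]
  have hB2 : B ^ 2 = 0 := by
    ext x
    have h1 : A x - x ∈ 𝔫 := hCn (hU x)
    have h2 : A (A x - x) = A x - x := hfix _ h1
    simp only [Module.End.pow_apply, Function.iterate_succ, Function.iterate_zero,
      Function.comp_apply, id_eq, LinearMap.zero_apply]
    rw [hBapply, hBapply, h2, sub_self]
  have hBss : B.IsSemisimple := Module.End.isSemisimple_sub_algebraMap_iff.mpr hss
  have hB0 : B = 0 := Module.End.eq_zero_of_isNilpotent_isSemisimple ⟨2, hB2⟩ hBss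
  intro X
  have := DFunLike.congr_fun hB0 X
  rw [hBapply] at this
  simpa [sub_eq_zero] using this
end

section
/- On the twisted Heisenberg algebra ℋℰ^t_d = ℝt ⊕ ℝZ ⊕ ℂ^d (with [t, X] = iX for X ∈ ℂ^d, [t, Z] = 0, [X, Y] = ω(X,Y)Z for X,Y ∈ ℂ^d), the symmetric bilinear form ⟨·,·⟩ defined by: the standard real inner product on ℂ^d, ℂ^d orthogonal to span(t, Z), ⟨t,t⟩ = ⟨Z,Z⟩ = 0, ⟨t,Z⟩ = 1, is a non-degenerate form of Lorentzian signature (1, 2d+1) that is ad-invariant: ⟨[u,v], w⟩ + ⟨v, [u,w]⟩ = 0 for all u, v, w. -/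
open scoped BigOperators

/-- The twisted Heisenberg algebra `ℋℰ^t_d = ℝt ⊕ ℝZ ⊕ ℂ^d` as a vector space:
an element `(a, b, v)` represents `a·t + b·Z + v`. -/
abbrev TwistedHeisenberg (d : ℕ) := ℝ × ℝ × (Fin d → ℂ)

/-- The standard symplectic form `ω(v,w) = ⟨v, iw⟩₀` on `ℂ^d` (the imaginary part of
the standard Hermitian product). -/
noncomputable def heisSymplectic {d : ℕ} (v w : Fin d → ℂ) : ℝ :=
  ∑ j, ((starRingEnd ℂ) (v j) * w j).im

/-- The Lie bracket of `ℋℰ^t_d`: `[t, X] = iX` for `X ∈ ℂ^d`, `[t, Z] = 0`, and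
`[X, Y] = ω(X,Y)·Z` for `X, Y ∈ ℂ^d`. -/
noncomputable def twistedHeisBracket {d : ℕ}
    (u u' : TwistedHeisenberg d) : TwistedHeisenberg d :=
  (0, heisSymplectic u.2.2 u'.2.2,
    fun j => u.1 • (Complex.I * u'.2.2 j) - u'.1 • (Complex.I * u.2.2 j))

/-- The bilinear form of the twisted Heisenberg algebra: the standard real inner
product on `ℂ^d`, with `ℂ^d ⊥ span(t, Z)`, `⟨t,t⟩ = ⟨Z,Z⟩ = 0` and `⟨t,Z⟩ = 1`. -/
noncomputable def twistedHeisForm {d : ℕ} (u u' : TwistedHeisenberg d) : ℝ :=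
  u.1 * u'.2.1 + u'.1 * u.2.1 + ∑ j, ((starRingEnd ℂ) (u.2.2 j) * u'.2.2 j).re


/-- pointwise ad-invariance identity -/
lemma heis_key (a bv bw : ℝ) (x y z : ℂ) :
    bw * ((starRingEnd ℂ) x * y).im
      + ((starRingEnd ℂ) (a • (Complex.I * y) - bv • (Complex.I * x)) * z).re
      + (bv * ((starRingEnd ℂ) x * z).im
      + ((starRingEnd ℂ) y * (a • (Complex.I * z) - bw • (Complex.I * x))).re) = 0 := by
  simp [Complex.ext_iff, Complex.mul_re, Complex.mul_im, Complex.real_smul]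
  ring

noncomputable def heisBasis (d : ℕ) (i : Fin (2 * d + 2)) : TwistedHeisenberg d :=
  if i.val = 0 then (1, -1, 0)
  else if i.val = 1 then (1, 1, 0)
  else (0, 0, fun k => if i.val = 2 * k.val + 2 then 1
    else if i.val = 2 * k.val + 3 then Complex.I else 0)

lemma heis_fst_sum {ι M N : Type*} [AddCommMonoid M] [AddCommMonoid N]
    (s : Finset ι) (f : ι → M × N) : (∑ i ∈ s, f i).1 = ∑ i ∈ s, (f i).1 :=
  map_sum (AddMonoidHom.fst M N) f s

lemma heis_snd_sum {ι M N : Type*} [AddCommMonoid M] [AddCommMonoid N]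
    (s : Finset ι) (f : ι → M × N) : (∑ i ∈ s, f i).2 = ∑ i ∈ s, (f i).2 :=
  map_sum (AddMonoidHom.snd M N) f s

/-- On the twisted Heisenberg algebra `ℋℰ^t_d`, the above symmetric
bilinear form is non-degenerate, of Lorentzian signature `(1, 2d+1)` (an orthogonal
spanning family with exactly one vector of negative square and `2d+1` of positive
square), and is ad-invariant: `⟨[u,v], w⟩ + ⟨v, [u,w]⟩ = 0` for all `u, v, w`. -/
theorem twistedHeisForm_lorentzian_and_ad_invariant (d : ℕ) :
    (∀ u v : TwistedHeisenberg d, twistedHeisForm u v = twistedHeisForm v u) ∧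
    (∀ u v w : TwistedHeisenberg d,
      twistedHeisForm (twistedHeisBracket u v) w
        + twistedHeisForm v (twistedHeisBracket u w) = 0) ∧
    (∀ u : TwistedHeisenberg d,
      (∀ w : TwistedHeisenberg d, twistedHeisForm u w = 0) → u = 0) ∧
    (∃ e : Fin (2 * d + 2) → TwistedHeisenberg d,
      Submodule.span ℝ (Set.range e) = ⊤ ∧
      (∀ i j, i ≠ j → twistedHeisForm (e i) (e j) = 0) ∧
      twistedHeisForm (e 0) (e 0) < 0 ∧
      ∀ i, i ≠ 0 → 0 < twistedHeisForm (e i) (e i)) := by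
  refine ⟨?_, ?_, ?_, ?_⟩
  · intro u v
    unfold twistedHeisForm
    have h : ∀ j : Fin d, ((starRingEnd ℂ) (u.2.2 j) * v.2.2 j).re
        = ((starRingEnd ℂ) (v.2.2 j) * u.2.2 j).re := by
      intro j; simp [Complex.mul_re]; ring
    rw [Finset.sum_congr rfl fun j _ => h j]; ring
  · intro u v w
    simp only [twistedHeisForm, twistedHeisBracket, heisSymplectic, zero_mul, zero_add,
      add_zero, mul_zero]
    rw [Finset.mul_sum, Finset.mul_sum, ← Finset.sum_add_distrib, ← Finset.sum_add_distrib,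
      ← Finset.sum_add_distrib]
    exact Finset.sum_eq_zero fun j _ => heis_key u.1 v.1 w.1 (u.2.2 j) (v.2.2 j) (w.2.2 j)
  · rintro ⟨a, b, v⟩ h
    have h1 := h (1, 0, 0)
    have h2 := h (0, 1, 0)
    have h3 := h (0, 0, v)
    simp [twistedHeisForm] at h1 h2 h3
    have h4 : ∀ j, v j = 0 := by
      intro j
      have hz := (Finset.sum_eq_zero_iff_of_nonneg
        (fun k _ => add_nonneg (mul_self_nonneg _) (mul_self_nonneg _))).mp h3 j
        (Finset.mem_univ j)
      have hre : (v j).re = 0 := by nlinarith [sq_nonneg (v j).re, sq_nonneg (v j).im]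
      have him : (v j).im = 0 := by nlinarith [sq_nonneg (v j).re, sq_nonneg (v j).im]
      exact Complex.ext hre him
    simp only [Prod.mk_eq_zero]
    exact ⟨h2, h1, funext h4⟩
  · refine ⟨heisBasis d, ?_, ?_, ?_, ?_⟩
    · rw [Submodule.eq_top_iff']
      rintro ⟨a, b, v⟩
      have hmem : ∀ i : Fin (2 * d + 2),
          heisBasis d i ∈ Submodule.span ℝ (Set.range (heisBasis d)) :=
        fun i => Submodule.subset_span (Set.mem_range_self i)
      have e0 : heisBasis d ⟨0, by omega⟩ = ((1 : ℝ), (-1 : ℝ), (0 : Fin d → ℂ)) := by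
        simp [heisBasis]
      have e1 : heisBasis d ⟨1, by omega⟩ = ((1 : ℝ), (1 : ℝ), (0 : Fin d → ℂ)) := by
        simp [heisBasis]
      have e2 : ∀ j : Fin d, heisBasis d ⟨2 * j.val + 2, by omega⟩
          = ((0 : ℝ), (0 : ℝ), fun k => if j = k then (1 : ℂ) else 0) := by
        intro j
        simp only [heisBasis]
        rw [if_neg (by omega : ¬(2 * j.val + 2 = 0)),
          if_neg (by omega : ¬(2 * j.val + 2 = 1))]
        refine Prod.ext rfl (Prod.ext rfl (funext fun k => ?_))
        dsimp only
        by_cases hjk : j = k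
        · subst hjk; simp
        · have hv : j.val ≠ k.val := fun h => hjk (Fin.ext h)
          rw [if_neg (by omega : ¬(2 * j.val + 2 = 2 * k.val + 2)),
            if_neg (by omega : ¬(2 * j.val + 2 = 2 * k.val + 3)), if_neg hjk]
      have e3 : ∀ j : Fin d, heisBasis d ⟨2 * j.val + 3, by omega⟩
          = ((0 : ℝ), (0 : ℝ), fun k => if j = k then Complex.I else 0) := by
        intro j
        simp only [heisBasis]
        rw [if_neg (by omega : ¬(2 * j.val + 3 = 0)),
          if_neg (by omega : ¬(2 * j.val + 3 = 1))]
        refine Prod.ext rfl (Prod.ext rfl (funext fun k => ?_))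
        dsimp only
        by_cases hjk : j = k
        · subst hjk; simp
        · have hv : j.val ≠ k.val := fun h => hjk (Fin.ext h)
          rw [if_neg (by omega : ¬(2 * j.val + 3 = 2 * k.val + 2)),
            if_neg (by omega : ¬(2 * j.val + 3 = 2 * k.val + 3)), if_neg hjk]
      have hx : (a, b, v) = ((a - b) / 2) • heisBasis d ⟨0, by omega⟩
          + ((a + b) / 2) • heisBasis d ⟨1, by omega⟩
          + ∑ j : Fin d, ((v j).re • heisBasis d ⟨2 * j.val + 2, by omega⟩
            + (v j).im • heisBasis d ⟨2 * j.val + 3, by omega⟩) := by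
        simp only [e0, e1]
        rw [Finset.sum_congr rfl fun j _ => by rw [e2 j, e3 j]]
        refine Prod.ext ?_ (Prod.ext ?_ ?_)
        · simp only [Prod.fst_add, Prod.smul_fst, heis_fst_sum, heis_snd_sum,
            smul_eq_mul, mul_one, mul_zero, mul_neg, add_zero, smul_zero,
            Finset.sum_const_zero]
          ring
        · simp only [Prod.snd_add, Prod.smul_snd, heis_snd_sum, Prod.fst_add,
            Prod.smul_fst, heis_fst_sum, smul_eq_mul, mul_one, mul_zero, mul_neg,
            add_zero, smul_zero, Finset.sum_const_zero]
          ring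
        · funext k
          simp only [Prod.snd_add, Prod.smul_snd, heis_snd_sum, Pi.add_apply,
            Pi.smul_apply, Finset.sum_apply, smul_zero, zero_add]
          have hcong : ∀ j ∈ Finset.univ, ((v j).re • (if j = k then (1 : ℂ) else 0)
              + (v j).im • (if j = k then Complex.I else 0))
              = if j = k then ((v j).re • (1 : ℂ) + (v j).im • Complex.I) else 0 := by
            intro j _
            by_cases hjk : j = k <;> simp [hjk]
          rw [Finset.sum_congr rfl hcong, Finset.sum_ite_eq']
          simp [Complex.real_smul]
      rw [hx]
      exact add_mem (add_mem (Submodule.smul_mem _ _ (hmem _))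
        (Submodule.smul_mem _ _ (hmem _)))
        (Submodule.sum_mem _ fun j _ => add_mem (Submodule.smul_mem _ _ (hmem _))
          (Submodule.smul_mem _ _ (hmem _)))
    · intro i j hij
      have hij' : i.val ≠ j.val := fun h => hij (Fin.ext h)
      unfold twistedHeisForm heisBasis
      by_cases hi0 : i.val = 0 <;> by_cases hi1 : i.val = 1 <;>
        by_cases hj0 : j.val = 0 <;> by_cases hj1 : j.val = 1
      all_goals first
        | omega
        | (simp [hi0, hi1, hj0, hj1]; done)
        | (simp only [hi0, hi1, hj0, hj1, if_false, if_true, zero_mul, mul_zero,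
            zero_add, add_zero]
           refine Finset.sum_eq_zero fun k _ => ?_
           by_cases h1 : i.val = 2 * k.val + 2 <;> by_cases h2 : i.val = 2 * k.val + 3 <;>
             by_cases h3 : j.val = 2 * k.val + 2 <;> by_cases h4 : j.val = 2 * k.val + 3 <;>
             first
               | omega
               | simp [h1, h2, h3, h4, Complex.mul_re])
    · have h0 : ((0 : Fin (2 * d + 2)) : ℕ) = 0 := rfl
      unfold twistedHeisForm heisBasis
      rw [h0]
      norm_num
    · intro i hi
      have hi' : i.val ≠ 0 := by
        intro h; exact hi (Fin.ext (by simpa using h))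
      by_cases hi1 : i.val = 1
      · unfold twistedHeisForm heisBasis
        simp [hi', hi1]
      · have hlt := i.isLt
        have hk0lt : (i.val - 2) / 2 < d := by omega
        set k0 : Fin d := ⟨(i.val - 2) / 2, hk0lt⟩ with hk0def
        have hk0 : k0.val = (i.val - 2) / 2 := rfl
        unfold twistedHeisForm heisBasis
        simp only [hi', hi1, if_false, zero_mul, mul_zero, zero_add, add_zero]
        have hcong : ∀ k ∈ Finset.univ,
            ((starRingEnd ℂ) (if i.val = 2 * k.val + 2 then (1 : ℂ)
                else if i.val = 2 * k.val + 3 then Complex.I else 0)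
              * (if i.val = 2 * k.val + 2 then (1 : ℂ)
                else if i.val = 2 * k.val + 3 then Complex.I else 0)).re
            = if k = k0 then (1 : ℝ) else 0 := by
          intro k _
          by_cases hk : k = k0
          · have hkv : k.val = k0.val := by rw [hk]
            have hpar : i.val = 2 * k.val + 2 ∨ i.val = 2 * k.val + 3 := by omega
            rcases hpar with h | h
            · rw [if_pos h, if_pos hk]; simp
            · rw [if_neg (by omega : ¬(i.val = 2 * k.val + 2)), if_pos h, if_pos hk]
              simp [Complex.mul_re]
          · have hkv : k.val ≠ k0.val := fun hh => hk (Fin.ext hh)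
            rw [if_neg (by omega : ¬(i.val = 2 * k.val + 2)),
              if_neg (by omega : ¬(i.val = 2 * k.val + 3)), if_neg hk]
            simp
        rw [Finset.sum_congr rfl hcong, Finset.sum_ite_eq']
        simp
end

section
/- Let 𝔰 be the Lie algebra of a twisted Heisenberg group (semidirect product 𝔰 = ℝt ⋉ ℋℰ_d where ad_t acts on ℂ^d as a ℂ-linear diagonalizable map R = ad_t with eigenvalues iλ₁, ..., iλ_d, λ_j nonzero integers of the same sign, and ad_t(Z)=0). Then any two ad-invariant Lorentzian symmetric bilinear forms on 𝔰 are equivalent by a Lie algebra automorphism of 𝔰. -/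
open scoped BigOperators

/-- The twisted Heisenberg algebra with twist `lam : Fin d → ℤ`: the underlying
vector space is `ℝt ⊕ ℝZ ⊕ ℂ^d`, an element `(a, b, v)` representing
`a·t + b·Z + v`. -/
abbrev TwistedHeis (d : ℕ) := ℝ × ℝ × (Fin d → ℂ)

/-- The standard symplectic form on `ℂ^d`. -/
noncomputable def twSymp {d : ℕ} (v w : Fin d → ℂ) : ℝ :=
  ∑ j, ((starRingEnd ℂ) (v j) * w j).im

/-- The bracket of the twisted Heisenberg algebra with twist `lam`:
`ad_t` acts on `ℂ^d` as the diagonal `ℂ`-linear map with eigenvalues `i·lam j`,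
`[t,Z] = 0`, and `[X,Y] = ω(X,Y)·Z` for `X, Y ∈ ℂ^d`. -/
noncomputable def twBracket {d : ℕ} (lam : Fin d → ℤ)
    (u u' : TwistedHeis d) : TwistedHeis d :=
  (0, twSymp u.2.2 u'.2.2,
    fun j => u.1 • ((lam j : ℝ) • (Complex.I * u'.2.2 j))
      - u'.1 • ((lam j : ℝ) • (Complex.I * u.2.2 j)))

/-- A symmetric bilinear form on a `(2d+2)`-dimensional space is Lorentzian if it
admits an orthogonal spanning family with exactly one vector of negative square. -/
def IsLorentzianForm {d : ℕ} (κ : TwistedHeis d →ₗ[ℝ] TwistedHeis d →ₗ[ℝ] ℝ) : Prop :=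
  ∃ e : Fin (2 * d + 2) → TwistedHeis d,
    Submodule.span ℝ (Set.range e) = ⊤ ∧
    (∀ i j, i ≠ j → κ (e i) (e j) = 0) ∧
    κ (e 0) (e 0) < 0 ∧ ∀ i, i ≠ 0 → 0 < κ (e i) (e i)

section tw_aux
variable {d : ℕ} (lam : Fin d → ℤ)

lemma tw_decomp (u : TwistedHeis d) :
    u = u.1 • ((1:ℝ),(0:ℝ),(0:Fin d → ℂ)) + u.2.1 • ((0:ℝ),(1:ℝ),(0:Fin d → ℂ))
        + ((0:ℝ),(0:ℝ),u.2.2) := by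
  refine Prod.ext ?_ (Prod.ext ?_ ?_) <;> simp

lemma br_tX (v : Fin d → ℂ) :
    twBracket lam ((1:ℝ),(0:ℝ),(0:Fin d → ℂ)) ((0:ℝ),(0:ℝ),v)
      = ((0:ℝ),(0:ℝ), fun j => (lam j : ℝ) • (Complex.I * v j)) := by
  refine Prod.ext ?_ (Prod.ext ?_ ?_) <;> simp [twBracket, twSymp]

lemma br_Xt (v : Fin d → ℂ) :
    twBracket lam ((0:ℝ),(0:ℝ),v) ((1:ℝ),(0:ℝ),(0:Fin d → ℂ))
      = -((0:ℝ),(0:ℝ), fun j => (lam j : ℝ) • (Complex.I * v j)) := by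
  refine Prod.ext ?_ (Prod.ext ?_ ?_) <;> simp [twBracket, twSymp]
  rfl

lemma br_tZ :
    twBracket lam ((1:ℝ),(0:ℝ),(0:Fin d → ℂ)) ((0:ℝ),(1:ℝ),(0:Fin d → ℂ)) = 0 := by
  refine Prod.ext ?_ (Prod.ext ?_ ?_) <;> simp [twBracket, twSymp]
  rfl

lemma br_XZ (v : Fin d → ℂ) :
    twBracket lam ((0:ℝ),(0:ℝ),v) ((0:ℝ),(1:ℝ),(0:Fin d → ℂ)) = 0 := by
  refine Prod.ext ?_ (Prod.ext ?_ ?_) <;> simp [twBracket, twSymp]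
  rfl

lemma br_XX (v w : Fin d → ℂ) :
    twBracket lam ((0:ℝ),(0:ℝ),v) ((0:ℝ),(0:ℝ),w)
      = twSymp v w • ((0:ℝ),(1:ℝ),(0:Fin d → ℂ)) := by
  refine Prod.ext ?_ (Prod.ext ?_ ?_) <;> simp [twBracket]
  rfl

/-- the "R-inverse" map -/
noncomputable def twRinv (v : Fin d → ℂ) : Fin d → ℂ :=
  fun j => -Complex.I * v j / ((lam j : ℝ) : ℂ)

lemma twRinv_spec (hlam0 : ∀ j, (lam j : ℝ) ≠ 0) (v : Fin d → ℂ) :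
    (fun j => (lam j : ℝ) • (Complex.I * twRinv lam v j)) = v := by
  funext j
  have hl' : ((lam j : ℤ) : ℂ) ≠ 0 := by exact_mod_cast hlam0 j
  rw [twRinv, Complex.real_smul]
  push_cast
  field_simp
  ring_nf
  simp [Complex.I_sq]

lemma twSymp_Rinv (hlam0 : ∀ j, (lam j : ℝ) ≠ 0) (v w : Fin d → ℂ) :
    twSymp (twRinv lam v) w
      = ∑ j, ((v j).re * (w j).re + (v j).im * (w j).im) / (lam j : ℝ) := by
  unfold twSymp twRinv
  refine Finset.sum_congr rfl fun j _ => ?_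
  have hl := hlam0 j
  simp [Complex.div_im, Complex.div_re, Complex.normSq, Complex.mul_im, Complex.mul_re]
  field_simp
  ring

/-- Classification of ad-invariant symmetric bilinear forms (d ≥ 1). -/
lemma tw_classify (hd : 0 < d) (hlam0 : ∀ j, (lam j : ℝ) ≠ 0)
    (κ : TwistedHeis d →ₗ[ℝ] TwistedHeis d →ₗ[ℝ] ℝ)
    (hs : ∀ u v, κ u v = κ v u)
    (hi : ∀ u v w, κ (twBracket lam u v) w + κ v (twBracket lam u w) = 0) :
    ∀ u v : TwistedHeis d, κ u v =
      κ ((1:ℝ),(0:ℝ),(0:Fin d → ℂ)) ((1:ℝ),(0:ℝ),(0:Fin d → ℂ)) * (u.1 * v.1)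
      + κ ((1:ℝ),(0:ℝ),(0:Fin d → ℂ)) ((0:ℝ),(1:ℝ),(0:Fin d → ℂ)) *
          (u.1 * v.2.1 + v.1 * u.2.1
            + ∑ j, ((u.2.2 j).re * (v.2.2 j).re + (u.2.2 j).im * (v.2.2 j).im) / (lam j : ℝ)) := by
  set t : TwistedHeis d := ((1:ℝ),(0:ℝ),(0:Fin d → ℂ)) with ht
  set Z : TwistedHeis d := ((0:ℝ),(1:ℝ),(0:Fin d → ℂ)) with hZ
  have hTX : ∀ v : Fin d → ℂ, κ t ((0:ℝ),(0:ℝ),v) = 0 := by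
    intro v
    have h := hi ((0:ℝ),(0:ℝ),twRinv lam v) t t
    rw [br_Xt, twRinv_spec lam hlam0 v] at h
    simp only [map_neg, LinearMap.neg_apply] at h
    rw [hs ((0:ℝ),(0:ℝ),v) t] at h
    linarith
  have hXT : ∀ v : Fin d → ℂ, κ ((0:ℝ),(0:ℝ),v) t = 0 := fun v => (hs _ _).trans (hTX v)
  have hZX : ∀ v : Fin d → ℂ, κ Z ((0:ℝ),(0:ℝ),v) = 0 := by
    intro v
    have h := hi t Z ((0:ℝ),(0:ℝ),twRinv lam v)
    rw [br_tZ, br_tX, twRinv_spec lam hlam0 v] at h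
    simpa using h
  have hXZ : ∀ v : Fin d → ℂ, κ ((0:ℝ),(0:ℝ),v) Z = 0 := fun v => (hs _ _).trans (hZX v)
  have hZZ : κ Z Z = 0 := by
    set e0 : Fin d → ℂ := fun k => if k = (⟨0,hd⟩ : Fin d) then (1:ℂ) else 0 with he0
    set ie0 : Fin d → ℂ := fun k => if k = (⟨0,hd⟩ : Fin d) then Complex.I else 0 with hie0
    have hsymp : twSymp e0 ie0 = 1 := by
      rw [twSymp, Finset.sum_eq_single (⟨0,hd⟩ : Fin d)]
      · simp [he0, hie0]
      · intro b _ hb; simp [he0, hie0, hb]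
      · simp
    have h := hi ((0:ℝ),(0:ℝ),e0) ((0:ℝ),(0:ℝ),ie0) Z
    rw [br_XX, br_XZ, hsymp] at h
    simpa using h
  have hXX : ∀ v w : Fin d → ℂ, κ ((0:ℝ),(0:ℝ),v) ((0:ℝ),(0:ℝ),w)
      = κ t Z * ∑ j, ((v j).re * (w j).re + (v j).im * (w j).im) / (lam j : ℝ) := by
    intro v w
    have h := hi ((0:ℝ),(0:ℝ),twRinv lam v) ((0:ℝ),(0:ℝ),w) t
    rw [br_XX, br_Xt, twRinv_spec lam hlam0 v] at h
    simp only [map_neg, LinearMap.neg_apply, map_smul, LinearMap.smul_apply,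
      smul_eq_mul] at h
    rw [twSymp_Rinv lam hlam0 v w] at h
    rw [hs ((0:ℝ),(0:ℝ),w) ((0:ℝ),(0:ℝ),v), hs Z t] at h
    linarith
  intro u v
  conv_lhs => rw [tw_decomp u, tw_decomp v]
  simp only [map_add, map_smul, LinearMap.add_apply, LinearMap.smul_apply, smul_eq_mul]
  rw [hZZ, hTX, hXT, hZX, hXZ, hXX]
  rw [hs Z t]
  ring

lemma tw_finrank : Module.finrank ℝ (TwistedHeis d) = 2 * d + 2 := by
  have h1 : Module.finrank ℝ (TwistedHeis d)
      = Module.finrank ℝ ℝ + (Module.finrank ℝ ℝ + Module.finrank ℝ (Fin d → ℂ)) := by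
    rw [Module.finrank_prod, Module.finrank_prod]
  rw [h1, Module.finrank_pi_fintype, Module.finrank_self]
  simp [Complex.finrank_real_complex]
  ring

/-- Diagonal expansion of a bilinear form in an orthogonal basis. -/
lemma tw_diag_expand {n : ℕ}
    (κ : TwistedHeis d →ₗ[ℝ] TwistedHeis d →ₗ[ℝ] ℝ)
    (B : Module.Basis (Fin n) ℝ (TwistedHeis d))
    (horth : ∀ i j, i ≠ j → κ (B i) (B j) = 0) (u v : TwistedHeis d) :
    κ u v = ∑ i, B.repr u i * B.repr v i * κ (B i) (B i) := by
  have hu : κ u v = ∑ i, B.repr v i * κ u (B i) := by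
    conv_lhs => rw [← B.sum_repr v]
    rw [map_sum]
    exact Finset.sum_congr rfl fun i _ => by rw [map_smul, smul_eq_mul]
  rw [hu]
  refine Finset.sum_congr rfl fun i _ => ?_
  have h2 : κ u (B i) = B.repr u i * κ (B i) (B i) := by
    conv_lhs => rw [← B.sum_repr u]
    rw [map_sum, LinearMap.sum_apply]
    rw [Finset.sum_eq_single i]
    · rw [map_smul, LinearMap.smul_apply, smul_eq_mul]
    · intro j _ hj
      rw [map_smul, LinearMap.smul_apply, smul_eq_mul, horth j i hj, mul_zero]
    · intro h; exact absurd (Finset.mem_univ i) h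
  rw [h2]; ring

/-- The arithmetic heart: a Lorentzian-signature diagonal form admits no
2-dimensional negative semidefinite pair (z null, x negative, orthogonal). -/
lemma tw_cs {n : ℕ} [NeZero n] (q z x : Fin n → ℝ)
    (hq0 : q 0 < 0) (hqpos : ∀ i, i ≠ 0 → 0 < q i)
    (E1 : ∑ i, z i * z i * q i = 0)
    (E2 : ∑ i, z i * x i * q i = 0)
    (hzne : ∃ i, z i ≠ 0)
    (E3 : ∑ i, x i * x i * q i < 0) : False := by
  classical
  have hsplit : ∀ f : Fin n → ℝ,
      ∑ i, f i = f 0 + ∑ i ∈ Finset.univ.erase 0, f i :=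
    fun f => (Finset.add_sum_erase Finset.univ f (Finset.mem_univ 0)).symm
  rw [hsplit] at E1 E2 E3
  have hqpos' : ∀ i ∈ Finset.univ.erase 0, 0 < q i :=
    fun i hi => hqpos i (Finset.ne_of_mem_erase hi)
  have hzsq : ∀ i ∈ Finset.univ.erase 0, z i * z i * q i = (z i * Real.sqrt (q i))^2 := by
    intro i hi
    rw [mul_pow, Real.sq_sqrt (hqpos' i hi).le]; ring
  have hxsq : ∀ i ∈ Finset.univ.erase 0, x i * x i * q i = (x i * Real.sqrt (q i))^2 := by
    intro i hi
    rw [mul_pow, Real.sq_sqrt (hqpos' i hi).le]; ring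
  have hzx : ∀ i ∈ Finset.univ.erase 0,
      z i * x i * q i = (z i * Real.sqrt (q i)) * (x i * Real.sqrt (q i)) := by
    intro i hi
    have h := Real.mul_self_sqrt (hqpos' i hi).le
    linear_combination (z i * x i) * h.symm
  have hCS := Finset.sum_mul_sq_le_sq_mul_sq (Finset.univ.erase 0)
    (fun i => z i * Real.sqrt (q i)) (fun i => x i * Real.sqrt (q i))
  rw [← Finset.sum_congr rfl hzx] at hCS
  rw [← Finset.sum_congr rfl hzsq, ← Finset.sum_congr rfl hxsq] at hCS
  have hz0 : z 0 ≠ 0 := by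
    intro h0
    have hsum0 : ∑ i ∈ Finset.univ.erase 0, z i * z i * q i = 0 := by
      rw [h0] at E1; linarith
    have hzero : ∀ i ∈ Finset.univ.erase 0, z i * z i * q i = 0 := by
      refine (Finset.sum_eq_zero_iff_of_nonneg ?_).mp hsum0
      intro i hi; nlinarith [hqpos' i hi, sq_nonneg (z i)]
    obtain ⟨i, hi⟩ := hzne
    have h0' : i ≠ 0 := fun h => hi (h ▸ h0)
    have hmem : i ∈ Finset.univ.erase 0 := Finset.mem_erase.mpr ⟨h0', Finset.mem_univ i⟩
    have h1 := hzero i hmem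
    have hqi := hqpos' i hmem
    exact absurd h1 (ne_of_gt (mul_pos (mul_self_pos.mpr hi) hqi))
  have hx0 : x 0 ≠ 0 := by
    intro h0
    rw [h0] at E3
    have : (0:ℝ) ≤ ∑ i ∈ Finset.univ.erase 0, x i * x i * q i := by
      refine Finset.sum_nonneg fun i hi => ?_
      nlinarith [hqpos' i hi, sq_nonneg (x i)]
    linarith
  -- P = ∑' z²q = -z0²q0 > 0 ; Qx = ∑' x²q < -x0²q0 ; M = ∑' zxq = -z0x0q0
  have hP : (∑ i ∈ Finset.univ.erase 0, z i * z i * q i) = -(z 0 * z 0 * q 0) := by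
    linarith
  have hM : (∑ i ∈ Finset.univ.erase 0, z i * x i * q i) = -(z 0 * x 0 * q 0) := by
    linarith
  have hQx : (∑ i ∈ Finset.univ.erase 0, x i * x i * q i) < -(x 0 * x 0 * q 0) := by
    linarith
  have hPpos : 0 < ∑ i ∈ Finset.univ.erase 0, z i * z i * q i := by
    rw [hP]
    have := mul_pos (mul_self_pos.mpr hz0) (neg_pos.mpr hq0)
    nlinarith
  have h1 : (∑ i ∈ Finset.univ.erase 0, z i * z i * q i)
        * (∑ i ∈ Finset.univ.erase 0, x i * x i * q i)
      < (∑ i ∈ Finset.univ.erase 0, z i * z i * q i) * (-(x 0 * x 0 * q 0)) :=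
    mul_lt_mul_of_pos_left hQx hPpos
  have h2 : (∑ i ∈ Finset.univ.erase 0, z i * z i * q i) * (-(x 0 * x 0 * q 0))
      = (∑ i ∈ Finset.univ.erase 0, z i * x i * q i) ^ 2 := by
    rw [hP, hM]; ring
  linarith

/-- Lorentzian ⇒ sign of `c = κ(t,Z)` matches that of the eigenvalues. -/
lemma tw_sign (hd : 0 < d) (hlam0 : ∀ j, (lam j : ℝ) ≠ 0)
    (κ : TwistedHeis d →ₗ[ℝ] TwistedHeis d →ₗ[ℝ] ℝ)
    (hs : ∀ u v, κ u v = κ v u)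
    (hi : ∀ u v w, κ (twBracket lam u v) w + κ v (twBracket lam u w) = 0)
    (hLor : IsLorentzianForm κ) :
    0 < κ ((1:ℝ),(0:ℝ),(0:Fin d → ℂ)) ((0:ℝ),(1:ℝ),(0:Fin d → ℂ)) / (lam ⟨0,hd⟩ : ℝ) := by
  classical
  obtain ⟨e, hspan, horth, hneg, hpos⟩ := hLor
  have hcl := tw_classify lam hd hlam0 κ hs hi
  set c : ℝ := κ ((1:ℝ),(0:ℝ),(0:Fin d → ℂ)) ((0:ℝ),(1:ℝ),(0:Fin d → ℂ)) with hc
  set l0 : ℝ := (lam ⟨0,hd⟩ : ℝ) with hl0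
  have hl0ne : l0 ≠ 0 := hlam0 _
  have hcard : Fintype.card (Fin (2*d+2)) = Module.finrank ℝ (TwistedHeis d) := by
    rw [tw_finrank]; simp
  let B : Module.Basis (Fin (2*d+2)) ℝ (TwistedHeis d) :=
    basisOfTopLeSpanOfCardEqFinrank e hspan.ge hcard
  have hBe : ⇑B = e := coe_basisOfTopLeSpanOfCardEqFinrank e hspan.ge hcard
  have horthB : ∀ i j, i ≠ j → κ (B i) (B j) = 0 := by
    intro i j hij; rw [hBe]; exact horth i j hij
  have hq : ∀ i, κ (B i) (B i) = κ (e i) (e i) := by intro i; rw [hBe]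
  have hexp : ∀ u v, κ u v = ∑ i, B.repr u i * B.repr v i * κ (e i) (e i) := by
    intro u v
    rw [tw_diag_expand κ B horthB u v]
    exact Finset.sum_congr rfl fun i _ => by rw [hq]
  have hZne : ∀ w : TwistedHeis d, B.repr w = 0 → w ≠ 0 → False := by
    intro w hw hne
    apply hne
    have h2 := congrArg B.repr.symm hw
    rw [B.repr.symm_apply_apply] at h2
    simpa using h2
  -- values from the classification
  have hZZ : κ ((0:ℝ),(1:ℝ),(0:Fin d → ℂ)) ((0:ℝ),(1:ℝ),(0:Fin d → ℂ)) = 0 := by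
    rw [hcl]; dsimp only; simp
  set e0 : Fin d → ℂ := fun k => if k = (⟨0,hd⟩ : Fin d) then (1:ℂ) else 0 with he0
  have hZX : κ ((0:ℝ),(1:ℝ),(0:Fin d → ℂ)) ((0:ℝ),(0:ℝ),e0) = 0 := by
    rw [hcl]; dsimp only; simp
  have hXXsum : (∑ j, ((e0 j).re * (e0 j).re + (e0 j).im * (e0 j).im) / (lam j : ℝ)) = 1 / l0 := by
    rw [Finset.sum_eq_single (⟨0,hd⟩ : Fin d)]
    · simp [he0, hl0]
    · intro b _ hb; simp [he0, hb]
    · simp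
  have hXX : κ ((0:ℝ),(0:ℝ),e0) ((0:ℝ),(0:ℝ),e0) = c / l0 := by
    rw [hcl]; dsimp only; rw [hXXsum]; ring
  have hqne : ∀ i, κ (e i) (e i) ≠ 0 := by
    intro i
    by_cases h0 : i = 0
    · subst h0; exact ne_of_lt hneg
    · exact ne_of_gt (hpos i h0)
  have hZne' : ((0:ℝ),(1:ℝ),(0:Fin d → ℂ)) ≠ (0 : TwistedHeis d) := by
    intro h
    have := congrArg (fun p : TwistedHeis d => p.2.1) h
    norm_num at this
  have hreprZ : ∃ i, B.repr ((0:ℝ),(1:ℝ),(0:Fin d → ℂ)) i ≠ 0 := by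
    by_contra hcon
    push_neg at hcon
    exact hZne _ (Finsupp.ext fun i => hcon i) hZne'
  -- c ≠ 0
  have hcne : c ≠ 0 := by
    intro hc0
    have hall : ∀ w, κ ((0:ℝ),(1:ℝ),(0:Fin d → ℂ)) w = 0 := by
      intro w; rw [hcl]; dsimp only; rw [hc0]; simp
    have hrepr0 : ∀ i, B.repr ((0:ℝ),(1:ℝ),(0:Fin d → ℂ)) i = 0 := by
      intro i
      have h := hexp ((0:ℝ),(1:ℝ),(0:Fin d → ℂ)) (B i)
      rw [hall (B i)] at h
      rw [Finset.sum_eq_single i] at h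
      · rw [Module.Basis.repr_self_apply] at h
        have h2 : B.repr ((0:ℝ),(1:ℝ),(0:Fin d → ℂ)) i * κ (e i) (e i) = 0 := by
          simpa using h.symm
        rcases mul_eq_zero.mp h2 with h' | h'
        · exact h'
        · exact absurd h' (hqne i)
      · intro j _ hj
        rw [Module.Basis.repr_self_apply, if_neg (fun h' => hj h'.symm)]
        ring
      · intro h'; exact absurd (Finset.mem_univ i) h'
    obtain ⟨i, hi⟩ := hreprZ
    exact hi (hrepr0 i)
  rcases lt_trichotomy (c / l0) 0 with hneg' | hzero | hpos'
  · exfalso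
    refine tw_cs (fun i => κ (e i) (e i))
      (fun i => B.repr ((0:ℝ),(1:ℝ),(0:Fin d → ℂ)) i)
      (fun i => B.repr ((0:ℝ),(0:ℝ),e0) i) hneg hpos ?_ ?_ hreprZ ?_
    · rw [← hexp, hZZ]
    · rw [← hexp, hZX]
    · rw [← hexp, hXX]; exact hneg'
  · exfalso
    rcases div_eq_zero_iff.mp hzero with h | h
    · exact hcne h
    · exact hl0ne h
  · exact hpos'

/-- the scaling map -/
noncomputable def twScale (d : ℕ) (r δ s : ℝ) : TwistedHeis d →ₗ[ℝ] TwistedHeis d where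
  toFun u := (u.1, r * u.2.1 + δ * u.1, fun j => (s:ℂ) * u.2.2 j)
  map_add' u v := by
    refine Prod.ext ?_ (Prod.ext ?_ ?_)
    · simp
    · simp; ring
    · funext j; simp; ring
  map_smul' a u := by
    refine Prod.ext ?_ (Prod.ext ?_ ?_)
    · simp
    · simp; ring
    · funext j; simp [Complex.real_smul]; ring

lemma twSymp_scale {d : ℕ} (s : ℝ) (v w : Fin d → ℂ) :
    twSymp (fun j => (s:ℂ) * v j) (fun j => (s:ℂ) * w j) = s^2 * twSymp v w := by
  rw [twSymp, twSymp, Finset.mul_sum]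
  refine Finset.sum_congr rfl fun j _ => ?_
  rw [map_mul, Complex.conj_ofReal]
  have : (s:ℂ) * (starRingEnd ℂ) (v j) * ((s:ℂ) * w j)
      = ((s^2 : ℝ) : ℂ) * ((starRingEnd ℂ) (v j) * w j) := by
    push_cast; ring
  rw [this, Complex.mul_im]
  simp [← Complex.ofReal_pow]

end tw_aux

/-- On the Lie algebra of a twisted Heisenberg group (twist
`lam : Fin d → ℤ` with all `lam j` nonzero of the same sign), any two ad-invariant
Lorentzian symmetric bilinear forms are equivalent by a Lie algebra automorphism. -/
theorem invariant_lorentz_forms_on_twisted_heisenberg_equivalent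
    {d : ℕ} (lam : Fin d → ℤ)
    (hlam : (∀ j, 0 < lam j) ∨ (∀ j, lam j < 0))
    (κ₁ κ₂ : TwistedHeis d →ₗ[ℝ] TwistedHeis d →ₗ[ℝ] ℝ)
    (hsymm₁ : ∀ u v, κ₁ u v = κ₁ v u) (hsymm₂ : ∀ u v, κ₂ u v = κ₂ v u)
    (hinv₁ : ∀ u v w, κ₁ (twBracket lam u v) w + κ₁ v (twBracket lam u w) = 0)
    (hinv₂ : ∀ u v w, κ₂ (twBracket lam u v) w + κ₂ v (twBracket lam u w) = 0)
    (hLor₁ : IsLorentzianForm κ₁) (hLor₂ : IsLorentzianForm κ₂) :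
    ∃ A : TwistedHeis d ≃ₗ[ℝ] TwistedHeis d,
      (∀ u v, A (twBracket lam u v) = twBracket lam (A u) (A v)) ∧
      (∀ u v, κ₂ (A u) (A v) = κ₁ u v) := by
  classical
  rcases Nat.eq_zero_or_pos d with rfl | hd
  · -- d = 0 : the bracket vanishes and any linear map is an automorphism
    obtain ⟨e₁, hspan₁, horth₁, hneg₁, hpos₁⟩ := hLor₁
    obtain ⟨e₂, hspan₂, horth₂, hneg₂, hpos₂⟩ := hLor₂
    have hbz : ∀ u v : TwistedHeis 0, twBracket lam u v = 0 := by
      intro u v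
      refine Prod.ext ?_ (Prod.ext ?_ ?_)
      · rfl
      · simp [twBracket, twSymp]
      · funext j; exact j.elim0
    have hcard : Fintype.card (Fin (2*0+2)) = Module.finrank ℝ (TwistedHeis 0) := by
      rw [tw_finrank]; simp
    let B₁ : Module.Basis (Fin (2*0+2)) ℝ (TwistedHeis 0) :=
      basisOfTopLeSpanOfCardEqFinrank e₁ hspan₁.ge hcard
    let B₂ : Module.Basis (Fin (2*0+2)) ℝ (TwistedHeis 0) :=
      basisOfTopLeSpanOfCardEqFinrank e₂ hspan₂.ge hcard
    have hB₁ : ⇑B₁ = e₁ := coe_basisOfTopLeSpanOfCardEqFinrank _ _ _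
    have hB₂ : ⇑B₂ = e₂ := coe_basisOfTopLeSpanOfCardEqFinrank _ _ _
    have hrpos : ∀ i, 0 < κ₁ (e₁ i) (e₁ i) / κ₂ (e₂ i) (e₂ i) := by
      intro i
      by_cases h0 : i = 0
      · subst h0; exact div_pos_of_neg_of_neg hneg₁ hneg₂
      · exact div_pos (hpos₁ i h0) (hpos₂ i h0)
    let w : Fin (2*0+2) → ℝˣ := fun i =>
      Units.mk0 (Real.sqrt (κ₁ (e₁ i) (e₁ i) / κ₂ (e₂ i) (e₂ i)))
        (ne_of_gt (Real.sqrt_pos.mpr (hrpos i)))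
    let B₂' := B₂.unitsSMul w
    let A := B₁.equiv B₂' (Equiv.refl _)
    have hA : ∀ i, A (B₁ i) = (w i : ℝ) • e₂ i := by
      intro i
      show (B₁.equiv B₂' (Equiv.refl _)) (B₁ i) = (w i : ℝ) • e₂ i
      rw [Module.Basis.equiv_apply, Equiv.refl_apply]
      show (B₂.unitsSMul w) i = (w i : ℝ) • e₂ i
      rw [Module.Basis.unitsSMul_apply, hB₂]
      rfl
    have key : ∀ i j, κ₂ (A (B₁ i)) (A (B₁ j)) = κ₁ (B₁ i) (B₁ j) := by
      intro i j
      rw [hA i, hA j]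
      simp only [map_smul, LinearMap.smul_apply, smul_eq_mul]
      rw [hB₁]
      by_cases hij : i = j
      · subst hij
        have hw : (w i : ℝ) * (w i : ℝ) = κ₁ (e₁ i) (e₁ i) / κ₂ (e₂ i) (e₂ i) := by
          simpa [w, Units.val_mk0] using Real.mul_self_sqrt (hrpos i).le
        have hne : κ₂ (e₂ i) (e₂ i) ≠ 0 := by
          by_cases h0 : i = 0
          · subst h0; exact ne_of_lt hneg₂
          · exact ne_of_gt (hpos₂ i h0)
        rw [← mul_assoc, hw]
        field_simp
      · rw [horth₂ i j hij, horth₁ i j hij]; ring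
    have hbil : ∀ u v, κ₂ (A u) (A v) = κ₁ u v := by
      have h2 : (κ₂.compl₁₂ (A : TwistedHeis 0 →ₗ[ℝ] TwistedHeis 0)
          (A : TwistedHeis 0 →ₗ[ℝ] TwistedHeis 0)) = κ₁ :=
        B₁.ext fun i => B₁.ext fun j => by
          simpa [LinearMap.compl₁₂_apply] using key i j
      intro u v
      have := LinearMap.congr_fun (LinearMap.congr_fun h2 u) v
      simpa [LinearMap.compl₁₂_apply] using this
    exact ⟨A, fun u v => by rw [hbz, hbz]; simp, hbil⟩
  · -- d ≥ 1
    have hlam0 : ∀ j, (lam j : ℝ) ≠ 0 := by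
      intro j
      rcases hlam with h | h
      · exact ne_of_gt (by exact_mod_cast h j)
      · exact ne_of_lt (by exact_mod_cast h j)
    have hcl₁ := tw_classify lam hd hlam0 κ₁ hsymm₁ hinv₁
    have hcl₂ := tw_classify lam hd hlam0 κ₂ hsymm₂ hinv₂
    have hs₁ := tw_sign lam hd hlam0 κ₁ hsymm₁ hinv₁ hLor₁
    have hs₂ := tw_sign lam hd hlam0 κ₂ hsymm₂ hinv₂ hLor₂
    have hl0ne : (lam ⟨0,hd⟩ : ℝ) ≠ 0 := hlam0 _
    have hc₂ne : κ₂ ((1:ℝ),(0:ℝ),(0:Fin d → ℂ)) ((0:ℝ),(1:ℝ),(0:Fin d → ℂ)) ≠ 0 := by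
      intro h0
      rw [h0, zero_div] at hs₂
      exact lt_irrefl 0 hs₂
    have hr : 0 < κ₁ ((1:ℝ),(0:ℝ),(0:Fin d → ℂ)) ((0:ℝ),(1:ℝ),(0:Fin d → ℂ))
        / κ₂ ((1:ℝ),(0:ℝ),(0:Fin d → ℂ)) ((0:ℝ),(1:ℝ),(0:Fin d → ℂ)) := by
      have h : κ₁ ((1:ℝ),(0:ℝ),(0:Fin d → ℂ)) ((0:ℝ),(1:ℝ),(0:Fin d → ℂ))
          / κ₂ ((1:ℝ),(0:ℝ),(0:Fin d → ℂ)) ((0:ℝ),(1:ℝ),(0:Fin d → ℂ))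
          = (κ₁ ((1:ℝ),(0:ℝ),(0:Fin d → ℂ)) ((0:ℝ),(1:ℝ),(0:Fin d → ℂ)) / (lam ⟨0,hd⟩ : ℝ))
            / (κ₂ ((1:ℝ),(0:ℝ),(0:Fin d → ℂ)) ((0:ℝ),(1:ℝ),(0:Fin d → ℂ)) / (lam ⟨0,hd⟩ : ℝ)) := by
        field_simp
      rw [h]
      exact div_pos hs₁ hs₂
    -- abbreviations
    set c₁ : ℝ := κ₁ ((1:ℝ),(0:ℝ),(0:Fin d → ℂ)) ((0:ℝ),(1:ℝ),(0:Fin d → ℂ)) with hc₁def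
    set c₂ : ℝ := κ₂ ((1:ℝ),(0:ℝ),(0:Fin d → ℂ)) ((0:ℝ),(1:ℝ),(0:Fin d → ℂ)) with hc₂def
    set μ₁ : ℝ := κ₁ ((1:ℝ),(0:ℝ),(0:Fin d → ℂ)) ((1:ℝ),(0:ℝ),(0:Fin d → ℂ)) with hμ₁def
    set μ₂ : ℝ := κ₂ ((1:ℝ),(0:ℝ),(0:Fin d → ℂ)) ((1:ℝ),(0:ℝ),(0:Fin d → ℂ)) with hμ₂def
    set r : ℝ := c₁ / c₂ with hrdef
    set s : ℝ := Real.sqrt r with hsdef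
    have hs2 : s ^ 2 = r := Real.sq_sqrt hr.le
    have hrne : r ≠ 0 := ne_of_gt hr
    have hsne : s ≠ 0 := ne_of_gt (Real.sqrt_pos.mpr hr)
    set δ : ℝ := (μ₁ - μ₂) / (2 * c₂) with hδdef
    set F : TwistedHeis d →ₗ[ℝ] TwistedHeis d := twScale d r δ s with hFdef
    set G : TwistedHeis d →ₗ[ℝ] TwistedHeis d := twScale d r⁻¹ (-δ/r) s⁻¹ with hGdef
    have hF1 : ∀ u : TwistedHeis d,
        F u = (u.1, r * u.2.1 + δ * u.1, fun j => (s:ℂ) * u.2.2 j) := fun u => rfl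
    have hG1 : ∀ u : TwistedHeis d,
        G u = (u.1, r⁻¹ * u.2.1 + (-δ/r) * u.1, fun j => ((s⁻¹ : ℝ):ℂ) * u.2.2 j) :=
      fun u => rfl
    have hFG : F.comp G = LinearMap.id := by
      apply LinearMap.ext; intro u
      rw [LinearMap.comp_apply, hG1, hF1, LinearMap.id_apply]
      refine Prod.ext ?_ (Prod.ext ?_ ?_)
      · rfl
      · show r * (r⁻¹ * u.2.1 + (-δ/r) * u.1) + δ * u.1 = u.2.1
        field_simp
        ring
      · funext j
        show (s:ℂ) * (((s⁻¹:ℝ):ℂ) * u.2.2 j) = u.2.2 j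
        have : (s:ℂ) * ((s⁻¹:ℝ):ℂ) = 1 := by
          push_cast
          rw [mul_inv_cancel₀ (by exact_mod_cast hsne)]
        rw [← mul_assoc, this, one_mul]
    have hGF : G.comp F = LinearMap.id := by
      apply LinearMap.ext; intro u
      rw [LinearMap.comp_apply, hF1, hG1, LinearMap.id_apply]
      refine Prod.ext ?_ (Prod.ext ?_ ?_)
      · rfl
      · show r⁻¹ * (r * u.2.1 + δ * u.1) + (-δ/r) * u.1 = u.2.1
        field_simp
        ring
      · funext j
        show ((s⁻¹:ℝ):ℂ) * ((s:ℂ) * u.2.2 j) = u.2.2 j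
        have : ((s⁻¹:ℝ):ℂ) * (s:ℂ) = 1 := by
          push_cast
          rw [inv_mul_cancel₀ (by exact_mod_cast hsne)]
        rw [← mul_assoc, this, one_mul]
    refine ⟨LinearEquiv.ofLinear F G hFG hGF, ?_, ?_⟩
    · -- Lie algebra automorphism
      intro u v
      show F (twBracket lam u v) = twBracket lam (F u) (F v)
      rw [hF1, hF1, hF1]
      refine Prod.ext ?_ (Prod.ext ?_ ?_)
      · rfl
      · show r * (twBracket lam u v).2.1 + δ * (twBracket lam u v).1
            = (twBracket lam (u.1, r * u.2.1 + δ * u.1, fun j => (s:ℂ) * u.2.2 j)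
                (v.1, r * v.2.1 + δ * v.1, fun j => (s:ℂ) * v.2.2 j)).2.1
        show r * twSymp u.2.2 v.2.2 + δ * 0
            = twSymp (fun j => (s:ℂ) * u.2.2 j) (fun j => (s:ℂ) * v.2.2 j)
        rw [twSymp_scale, hs2]
        ring
      · funext j
        show (s:ℂ) * (u.1 • ((lam j : ℝ) • (Complex.I * v.2.2 j))
              - v.1 • ((lam j : ℝ) • (Complex.I * u.2.2 j)))
            = u.1 • ((lam j : ℝ) • (Complex.I * ((s:ℂ) * v.2.2 j)))
              - v.1 • ((lam j : ℝ) • (Complex.I * ((s:ℂ) * u.2.2 j)))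
        simp only [Complex.real_smul]
        ring
    · -- isometry
      intro u v
      show κ₂ (F u) (F v) = κ₁ u v
      rw [hF1, hF1, hcl₂, hcl₁]
      simp only []
      have hsum : (∑ j, (((s:ℂ) * u.2.2 j).re * ((s:ℂ) * v.2.2 j).re
            + ((s:ℂ) * u.2.2 j).im * ((s:ℂ) * v.2.2 j).im) / (lam j : ℝ))
          = s^2 * ∑ j, ((u.2.2 j).re * (v.2.2 j).re
            + (u.2.2 j).im * (v.2.2 j).im) / (lam j : ℝ) := by
        rw [Finset.mul_sum]
        refine Finset.sum_congr rfl fun j _ => ?_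
        simp only [Complex.mul_re, Complex.mul_im, Complex.ofReal_re, Complex.ofReal_im]
        ring
      rw [hsum, hs2]
      have e1 : c₂ * r = c₁ := by rw [hrdef]; field_simp
      have e2 : μ₂ + 2 * c₂ * δ = μ₁ := by rw [hδdef]; field_simp; ring
      linear_combination (u.1 * v.1) * e2
        + (u.1 * v.2.1 + v.1 * u.2.1
            + ∑ j, ((u.2.2 j).re * (v.2.2 j).re + (u.2.2 j).im * (v.2.2 j).im) / (lam j : ℝ)) * e1
end
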